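/- The factorizations T, W₀ and W₁ in Map₂ are fully invariant: for every element γ ∈ Map₂, (T)_γ is Hurwitz equivalent to T, (W₀)_γ is Hurwitz equivalent to W₀, and (W₁)_γ is Hurwitz equivalent to W₁. -/

import Mathlib

/-- A single Hurwitz move: replace two consecutive entries `(x, y)` by `(x y x⁻¹, x)`. -/
def HurwitzMove {G : Type*} [Group G] (F F' : List G) : Prop :=
  ∃ (l₁ l₂ : List G) (x y : G),
    F = l₁ ++ x :: y :: l₂ ∧ F' = l₁ ++ (x * y * x⁻¹) :: x :: l₂

/-- Hurwitz equivalence: the reflexive-symmetric-transitive closure of Hurwitz moves.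
(The symmetric closure accounts for the inverse move `(x, y) ↦ (y, y⁻¹ x y)`.) -/
def HurwitzEquiv {G : Type*} [Group G] : List G → List G → Prop :=
  Relation.EqvGen HurwitzMove

/-- `n`-fold concatenation of a factorization with itself. -/
def fpow {G : Type*} (F : List G) (n : ℕ) : List G :=
  (List.replicate n F).flatten

/-- Simultaneous conjugation of all entries of a factorization by `φ`: `τ ↦ φ⁻¹ τ φ`. -/
def fconj {G : Type*} [Group G] (F : List G) (φ : G) : List G :=
  F.map fun τ => φ⁻¹ * τ * φ

/-- Generators of the free group on five letters. -/
abbrev fg (i : Fin 5) : FreeGroup (Fin 5) := FreeGroup.of i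

/-- The word `ζ₁ζ₂ζ₃ζ₄ζ₅` in the free group. -/
def Δw : FreeGroup (Fin 5) := fg 0 * fg 1 * fg 2 * fg 3 * fg 4

/-- The word `ζ₁ζ₂ζ₃ζ₄ζ₅²ζ₄ζ₃ζ₂ζ₁` in the free group. -/
def Iw : FreeGroup (Fin 5) :=
  fg 0 * fg 1 * fg 2 * fg 3 * fg 4 * fg 4 * fg 3 * fg 2 * fg 1 * fg 0

/-- Relations for the presentation of the genus-2 mapping class group `Map₂`:
commutations `ζᵢζⱼ = ζⱼζᵢ` for `|i - j| ≥ 2`, braid relations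
`ζᵢζᵢ₊₁ζᵢ = ζᵢ₊₁ζᵢζᵢ₊₁`, `(ζ₁ζ₂ζ₃ζ₄ζ₅)⁶ = 1`, `I = ζ₁ζ₂ζ₃ζ₄ζ₅²ζ₄ζ₃ζ₂ζ₁` is central,
and `I² = 1`. -/
def map2Rels : Set (FreeGroup (Fin 5)) :=
  { r | (∃ i j : Fin 5, (i : ℕ) + 2 ≤ (j : ℕ) ∧ r = fg i * fg j * (fg i)⁻¹ * (fg j)⁻¹) ∨
        (∃ i : Fin 4, r = fg i.castSucc * fg i.succ * fg i.castSucc *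
          (fg i.succ * fg i.castSucc * fg i.succ)⁻¹) ∨
        r = Δw ^ 6 ∨
        (∃ i : Fin 5, r = Iw * fg i * Iw⁻¹ * (fg i)⁻¹) ∨
        r = Iw ^ 2 }

/-- The mapping class group of a closed genus-2 surface, via its standard presentation. -/
abbrev Map₂ : Type := PresentedGroup map2Rels

/-- The Dehn twist generators `ζ₁, …, ζ₅` (indexed by `Fin 5`, so `ζ 0 = ζ₁`, …). -/
def ζ (i : Fin 5) : Map₂ := PresentedGroup.of i

/-- The hyperelliptic involution `I = ζ₁ζ₂ζ₃ζ₄ζ₅²ζ₄ζ₃ζ₂ζ₁` as an element of `Map₂`. -/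
def Ihe : Map₂ := ζ 0 * ζ 1 * ζ 2 * ζ 3 * ζ 4 * ζ 4 * ζ 3 * ζ 2 * ζ 1 * ζ 0

/-- The separating Dehn twist `σ = (ζ₁ζ₂)⁶`. -/
def σ : Map₂ := (ζ 0 * ζ 1) ^ 6

/-- The factorization `T = ζ₁·ζ₂·ζ₃·ζ₄·ζ₅·ζ₅·ζ₄·ζ₃·ζ₂·ζ₁`. -/
def T : List Map₂ := [ζ 0, ζ 1, ζ 2, ζ 3, ζ 4, ζ 4, ζ 3, ζ 2, ζ 1, ζ 0]

/-- The factorization `W₀ = (T)²`. -/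
def W₀ : List Map₂ := T ++ T

/-- The factorization `W₁ = (ζ₁·ζ₂·ζ₃·ζ₄·ζ₅)⁶`. -/
def W₁ : List Map₂ := fpow [ζ 0, ζ 1, ζ 2, ζ 3, ζ 4] 6

/-- The factorization `Φ_f = ζ₃·ζ₄·ζ₅·ζ₂·ζ₃·ζ₄·ζ₁·ζ₂·ζ₃`. -/
def Φf : List Map₂ := [ζ 2, ζ 3, ζ 4, ζ 1, ζ 2, ζ 3, ζ 0, ζ 1, ζ 2]

/-- The factorization `W₂ = σ·(ζ₃·ζ₄·ζ₅·ζ₂·ζ₃·ζ₄·ζ₁·ζ₂·ζ₃)²·T`. -/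
def W₂ : List Map₂ := σ :: (Φf ++ Φf ++ T)


/-! ### Auxiliary infrastructure for Hurwitz equivalence -/

section HurwitzInfra
variable {G : Type*} [Group G]

private theorem he_refl (F : List G) : HurwitzEquiv F F := Relation.EqvGen.refl F

private theorem he_symm {F F' : List G} (h : HurwitzEquiv F F') : HurwitzEquiv F' F :=
  Relation.EqvGen.symm _ _ h

private theorem he_trans {F F' F'' : List G} (h : HurwitzEquiv F F')
    (h' : HurwitzEquiv F' F'') : HurwitzEquiv F F'' := Relation.EqvGen.trans _ _ _ h h'

private theorem hmR (l₁ l₂ : List G) (x y z : G) (h : z = x * y * x⁻¹) :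
    HurwitzEquiv (l₁ ++ x :: y :: l₂) (l₁ ++ z :: x :: l₂) :=
  Relation.EqvGen.rel _ _ ⟨l₁, l₂, x, y, rfl, by rw [h]⟩

private theorem hmL (l₁ l₂ : List G) (x y z : G) (h : z = y⁻¹ * x * y) :
    HurwitzEquiv (l₁ ++ x :: y :: l₂) (l₁ ++ y :: z :: l₂) := by
  have hx : y * z * y⁻¹ = x := by rw [h]; group
  exact he_symm (Relation.EqvGen.rel _ _ ⟨l₁, l₂, y, z, rfl, by rw [hx]⟩)

private theorem hmove_append_left (L : List G) {F F' : List G} (h : HurwitzMove F F') :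
    HurwitzMove (L ++ F) (L ++ F') := by
  obtain ⟨l₁, l₂, x, y, h1, h2⟩ := h
  exact ⟨L ++ l₁, l₂, x, y, by rw [h1, List.append_assoc], by rw [h2, List.append_assoc]⟩

private theorem hmove_append_right (R : List G) {F F' : List G} (h : HurwitzMove F F') :
    HurwitzMove (F ++ R) (F' ++ R) := by
  obtain ⟨l₁, l₂, x, y, h1, h2⟩ := h
  exact ⟨l₁, l₂ ++ R, x, y, by simp [h1], by simp [h2]⟩

private theorem he_append_left (L : List G) {F F' : List G} (h : HurwitzEquiv F F') :
    HurwitzEquiv (L ++ F) (L ++ F') := by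
  induction h with
  | rel a b hab => exact Relation.EqvGen.rel _ _ (hmove_append_left L hab)
  | refl a => exact he_refl _
  | symm a b _ ih => exact he_symm ih
  | trans a b c _ _ ih1 ih2 => exact he_trans ih1 ih2

private theorem he_append_right (R : List G) {F F' : List G} (h : HurwitzEquiv F F') :
    HurwitzEquiv (F ++ R) (F' ++ R) := by
  induction h with
  | rel a b hab => exact Relation.EqvGen.rel _ _ (hmove_append_right R hab)
  | refl a => exact he_refl _
  | symm a b _ ih => exact he_symm ih
  | trans a b c _ _ ih1 ih2 => exact he_trans ih1 ih2

private theorem he_append {F F' Gl Gl' : List G} (h : HurwitzEquiv F F')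
    (h' : HurwitzEquiv Gl Gl') : HurwitzEquiv (F ++ Gl) (F' ++ Gl') :=
  he_trans (he_append_right Gl h) (he_append_left F' h')

private theorem fconj_append (F Gl : List G) (φ : G) :
    fconj (F ++ Gl) φ = fconj F φ ++ fconj Gl φ := List.map_append

private theorem fconj_one (F : List G) : fconj F 1 = F := by simp [fconj]

private theorem fconj_mul (F : List G) (a b : G) :
    fconj F (a * b) = fconj (fconj F a) b := by
  simp only [fconj, List.map_map]
  apply List.map_congr_left
  intro τ _
  simp only [Function.comp_apply, mul_inv_rev]
  group

private theorem fconj_equiv (φ : G) {F F' : List G} (h : HurwitzEquiv F F') :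
    HurwitzEquiv (fconj F φ) (fconj F' φ) := by
  induction h with
  | rel a b hab =>
    obtain ⟨l₁, l₂, x, y, h1, h2⟩ := hab
    have hxy : φ⁻¹ * (x * y * x⁻¹) * φ
        = (φ⁻¹ * x * φ) * (φ⁻¹ * y * φ) * (φ⁻¹ * x * φ)⁻¹ := by group
    refine Relation.EqvGen.rel _ _
      ⟨fconj l₁ φ, fconj l₂ φ, φ⁻¹ * x * φ, φ⁻¹ * y * φ, ?_, ?_⟩
    · rw [h1]; simp [fconj]
    · rw [h2]; simp only [fconj, List.map_append, List.map_cons]; rw [← hxy]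
  | refl a => exact he_refl _
  | symm a b _ ih => exact he_symm ih
  | trans a b c _ _ ih1 ih2 => exact he_trans ih1 ih2

private theorem prod_fconj (F : List G) (φ : G) :
    (fconj F φ).prod = φ⁻¹ * F.prod * φ := by
  induction F with
  | nil => simp [fconj]
  | cons a F ih => simp only [fconj, List.map_cons, List.prod_cons] at *; rw [ih]; group

private theorem rot1 (x : G) (L : List G) :
    HurwitzEquiv (x :: L) (L ++ [L.prod⁻¹ * x * L.prod]) := by
  induction L generalizing x with
  | nil => simpa using he_refl [x]
  | cons g L' ih =>
    have s1 : HurwitzEquiv (x :: g :: L') (g :: (g⁻¹ * x * g) :: L') := by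
      simpa using hmL [] L' x g _ rfl
    have s2 := he_append_left [g] (ih (g⁻¹ * x * g))
    have key : (g :: L').prod⁻¹ * x * (g :: L').prod
        = L'.prod⁻¹ * (g⁻¹ * x * g) * L'.prod := by
      rw [List.prod_cons]; group
    refine he_trans s1 ?_
    rw [key]
    simpa using s2

private theorem rot_c {c x : G} {L : List G} (hcent : ∀ h, c * h = h * c)
    (hp : (x :: L).prod = c) :
    HurwitzEquiv (x :: L) (L ++ [x]) ∧ (L ++ [x]).prod = c := by
  have hL : L.prod = x⁻¹ * c := by
    rw [List.prod_cons] at hp; rw [← hp]; group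
  have he : L.prod⁻¹ * x * L.prod = x := by
    rw [hL]
    have h2 : (x⁻¹ * c)⁻¹ * x * (x⁻¹ * c) = c⁻¹ * (x * c) := by group
    rw [h2, ← hcent x]; group
  constructor
  · have := rot1 x L; rwa [he] at this
  · rw [List.prod_append, hL, List.prod_cons, List.prod_nil, mul_one]
    calc x⁻¹ * c * x = x⁻¹ * (c * x) := by group
    _ = x⁻¹ * (x * c) := by rw [hcent]
    _ = c := by group

private theorem fpow_succ (F : List G) (n : ℕ) : fpow F (n + 1) = F ++ fpow F n := by
  simp [fpow, List.replicate_succ]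

private theorem he_fpow {F F' : List G} (h : HurwitzEquiv F F') (n : ℕ) :
    HurwitzEquiv (fpow F n) (fpow F' n) := by
  induction n with
  | zero => exact he_refl _
  | succ n ih => rw [fpow_succ, fpow_succ]; exact he_append h ih

private theorem fconj_fpow (F : List G) (φ : G) (n : ℕ) :
    fconj (fpow F n) φ = fpow (fconj F φ) n := by
  induction n with
  | zero => rfl
  | succ n ih => rw [fpow_succ, fpow_succ, fconj_append, ih]

end HurwitzInfra

/-! ### Relations in `Map₂` -/

private theorem mk_rel {r : FreeGroup (Fin 5)} (h : r ∈ map2Rels) :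
    PresentedGroup.mk map2Rels r = 1 := by
  have hm : r ∈ Subgroup.normalClosure map2Rels := Subgroup.subset_normalClosure h
  exact (QuotientGroup.eq_one_iff r).mpr hm

private theorem mk_fg (i : Fin 5) : PresentedGroup.mk map2Rels (fg i) = ζ i := rfl

private theorem comm_rel {i j : Fin 5} (h : (i : ℕ) + 2 ≤ (j : ℕ)) :
    ζ i * ζ j = ζ j * ζ i := by
  have h1 := mk_rel (Or.inl ⟨i, j, h, rfl⟩)
  simp only [map_mul, map_inv, mk_fg] at h1
  have h2 : (ζ i * ζ j) * (ζ j * ζ i)⁻¹ = 1 := by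
    calc (ζ i * ζ j) * (ζ j * ζ i)⁻¹ = ζ i * ζ j * (ζ i)⁻¹ * (ζ j)⁻¹ := by group
    _ = 1 := h1
  exact mul_inv_eq_one.mp h2

private theorem braid_rel (i : Fin 4) :
    ζ i.castSucc * ζ i.succ * ζ i.castSucc = ζ i.succ * ζ i.castSucc * ζ i.succ := by
  have h1 := mk_rel (Or.inr (Or.inl ⟨i, rfl⟩))
  simp only [map_mul, map_inv, mk_fg] at h1
  exact mul_inv_eq_one.mp h1

private theorem delta6 : (ζ 0 * ζ 1 * ζ 2 * ζ 3 * ζ 4) ^ 6 = 1 := by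
  have h1 := mk_rel (Or.inr (Or.inr (Or.inl rfl)))
  simp only [Δw, map_pow, map_mul, mk_fg] at h1
  exact h1

private theorem mk_Iw : PresentedGroup.mk map2Rels Iw = Ihe := by
  simp only [Iw, map_mul, mk_fg]; rfl

private theorem Icomm_gen (i : Fin 5) : Ihe * ζ i = ζ i * Ihe := by
  have h1 := mk_rel (Or.inr (Or.inr (Or.inr (Or.inl ⟨i, rfl⟩))))
  simp only [map_mul, map_inv, mk_fg, mk_Iw] at h1
  have h2 : (Ihe * ζ i) * (ζ i * Ihe)⁻¹ = 1 := by
    calc (Ihe * ζ i) * (ζ i * Ihe)⁻¹ = Ihe * ζ i * Ihe⁻¹ * (ζ i)⁻¹ := by group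
    _ = 1 := h1
  exact mul_inv_eq_one.mp h2

private theorem Icentral (g : Map₂) : Ihe * g = g * Ihe := by
  have hg : g ∈ Subgroup.centralizer {Ihe} := by
    refine PresentedGroup.generated_by map2Rels (Subgroup.centralizer {Ihe}) (fun j => ?_) g
    intro h hh
    rcases hh with rfl
    exact Icomm_gen j
  exact hg Ihe rfl

private theorem comm02 : ζ 0 * ζ 2 = ζ 2 * ζ 0 := comm_rel (by decide)
private theorem comm03 : ζ 0 * ζ 3 = ζ 3 * ζ 0 := comm_rel (by decide)
private theorem comm04 : ζ 0 * ζ 4 = ζ 4 * ζ 0 := comm_rel (by decide)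
private theorem comm13 : ζ 1 * ζ 3 = ζ 3 * ζ 1 := comm_rel (by decide)
private theorem comm14 : ζ 1 * ζ 4 = ζ 4 * ζ 1 := comm_rel (by decide)
private theorem comm24 : ζ 2 * ζ 4 = ζ 4 * ζ 2 := comm_rel (by decide)
private theorem braid01 : ζ 0 * ζ 1 * ζ 0 = ζ 1 * ζ 0 * ζ 1 := braid_rel 0
private theorem braid12 : ζ 1 * ζ 2 * ζ 1 = ζ 2 * ζ 1 * ζ 2 := braid_rel 1
private theorem braid23 : ζ 2 * ζ 3 * ζ 2 = ζ 3 * ζ 2 * ζ 3 := braid_rel 2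
private theorem braid34 : ζ 3 * ζ 4 * ζ 3 = ζ 4 * ζ 3 * ζ 4 := braid_rel 3

private theorem bconj {a b : Map₂} (h : a * b * a = b * a * b) :
    a * b * a⁻¹ = b⁻¹ * a * b := by
  calc a * b * a⁻¹ = b⁻¹ * (b * a * b) * a⁻¹ := by group
  _ = b⁻¹ * (a * b * a) * a⁻¹ := by rw [h]
  _ = b⁻¹ * a * b := by group

private theorem bc01 : ζ 0 * ζ 1 * (ζ 0)⁻¹ = (ζ 1)⁻¹ * ζ 0 * ζ 1 := bconj braid01
private theorem bc12 : ζ 1 * ζ 2 * (ζ 1)⁻¹ = (ζ 2)⁻¹ * ζ 1 * ζ 2 := bconj braid12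
private theorem bc23 : ζ 2 * ζ 3 * (ζ 2)⁻¹ = (ζ 3)⁻¹ * ζ 2 * ζ 3 := bconj braid23

/-! ### The elements `δ` and `w` and conjugation identities -/

private def dd : Map₂ := ζ 0 * ζ 1 * ζ 2 * ζ 3 * ζ 4
private theorem dd_def : dd = ζ 0 * ζ 1 * ζ 2 * ζ 3 * ζ 4 := rfl
private def wd : Map₂ := (ζ 0 * ζ 1 * ζ 2 * ζ 3) * ζ 4 * (ζ 0 * ζ 1 * ζ 2 * ζ 3)⁻¹
private theorem wd_def : wd = (ζ 0 * ζ 1 * ζ 2 * ζ 3) * ζ 4 * (ζ 0 * ζ 1 * ζ 2 * ζ 3)⁻¹ := rfl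

private theorem d1 : dd * ζ 0 = ζ 1 * dd := by
  calc dd * ζ 0 = ζ 0 * ζ 1 * ζ 2 * ζ 3 * (ζ 4 * ζ 0) := by rw [dd_def]; group
  _ = ζ 0 * ζ 1 * ζ 2 * ζ 3 * (ζ 0 * ζ 4) := by rw [← comm04]
  _ = ζ 0 * ζ 1 * ζ 2 * (ζ 3 * ζ 0) * ζ 4 := by group
  _ = ζ 0 * ζ 1 * ζ 2 * (ζ 0 * ζ 3) * ζ 4 := by rw [← comm03]
  _ = ζ 0 * ζ 1 * (ζ 2 * ζ 0) * ζ 3 * ζ 4 := by group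
  _ = ζ 0 * ζ 1 * (ζ 0 * ζ 2) * ζ 3 * ζ 4 := by rw [← comm02]
  _ = (ζ 0 * ζ 1 * ζ 0) * ζ 2 * ζ 3 * ζ 4 := by group
  _ = (ζ 1 * ζ 0 * ζ 1) * ζ 2 * ζ 3 * ζ 4 := by rw [braid01]
  _ = ζ 1 * dd := by rw [dd_def]; group

private theorem d2 : dd * ζ 1 = ζ 2 * dd := by
  calc dd * ζ 1 = ζ 0 * ζ 1 * ζ 2 * ζ 3 * (ζ 4 * ζ 1) := by rw [dd_def]; group
  _ = ζ 0 * ζ 1 * ζ 2 * ζ 3 * (ζ 1 * ζ 4) := by rw [← comm14]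
  _ = ζ 0 * ζ 1 * ζ 2 * (ζ 3 * ζ 1) * ζ 4 := by group
  _ = ζ 0 * ζ 1 * ζ 2 * (ζ 1 * ζ 3) * ζ 4 := by rw [← comm13]
  _ = ζ 0 * (ζ 1 * ζ 2 * ζ 1) * ζ 3 * ζ 4 := by group
  _ = ζ 0 * (ζ 2 * ζ 1 * ζ 2) * ζ 3 * ζ 4 := by rw [braid12]
  _ = (ζ 0 * ζ 2) * ζ 1 * ζ 2 * ζ 3 * ζ 4 := by group
  _ = (ζ 2 * ζ 0) * ζ 1 * ζ 2 * ζ 3 * ζ 4 := by rw [comm02]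
  _ = ζ 2 * dd := by rw [dd_def]; group

private theorem d3 : dd * ζ 2 = ζ 3 * dd := by
  calc dd * ζ 2 = ζ 0 * ζ 1 * ζ 2 * ζ 3 * (ζ 4 * ζ 2) := by rw [dd_def]; group
  _ = ζ 0 * ζ 1 * ζ 2 * ζ 3 * (ζ 2 * ζ 4) := by rw [← comm24]
  _ = ζ 0 * ζ 1 * (ζ 2 * ζ 3 * ζ 2) * ζ 4 := by group
  _ = ζ 0 * ζ 1 * (ζ 3 * ζ 2 * ζ 3) * ζ 4 := by rw [braid23]
  _ = ζ 0 * (ζ 1 * ζ 3) * ζ 2 * ζ 3 * ζ 4 := by group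
  _ = ζ 0 * (ζ 3 * ζ 1) * ζ 2 * ζ 3 * ζ 4 := by rw [comm13]
  _ = (ζ 0 * ζ 3) * ζ 1 * ζ 2 * ζ 3 * ζ 4 := by group
  _ = (ζ 3 * ζ 0) * ζ 1 * ζ 2 * ζ 3 * ζ 4 := by rw [comm03]
  _ = ζ 3 * dd := by rw [dd_def]; group

private theorem d4 : dd * ζ 3 = ζ 4 * dd := by
  calc dd * ζ 3 = ζ 0 * ζ 1 * ζ 2 * (ζ 3 * ζ 4 * ζ 3) := by rw [dd_def]; group
  _ = ζ 0 * ζ 1 * ζ 2 * (ζ 4 * ζ 3 * ζ 4) := by rw [braid34]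
  _ = ζ 0 * ζ 1 * (ζ 2 * ζ 4) * ζ 3 * ζ 4 := by group
  _ = ζ 0 * ζ 1 * (ζ 4 * ζ 2) * ζ 3 * ζ 4 := by rw [comm24]
  _ = ζ 0 * (ζ 1 * ζ 4) * ζ 2 * ζ 3 * ζ 4 := by group
  _ = ζ 0 * (ζ 4 * ζ 1) * ζ 2 * ζ 3 * ζ 4 := by rw [comm14]
  _ = (ζ 0 * ζ 4) * ζ 1 * ζ 2 * ζ 3 * ζ 4 := by group
  _ = (ζ 4 * ζ 0) * ζ 1 * ζ 2 * ζ 3 * ζ 4 := by rw [comm04]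
  _ = ζ 4 * dd := by rw [dd_def]; group

private theorem dd6 : dd ^ 6 = 1 := by rw [dd_def]; exact delta6

private theorem f0 : dd * ζ 0 * dd⁻¹ = ζ 1 := by rw [d1]; group
private theorem f1 : dd * ζ 1 * dd⁻¹ = ζ 2 := by rw [d2]; group
private theorem f2 : dd * ζ 2 * dd⁻¹ = ζ 3 := by rw [d3]; group
private theorem f3 : dd * ζ 3 * dd⁻¹ = ζ 4 := by rw [d4]; group
private theorem f4 : dd * ζ 4 * dd⁻¹ = wd := by rw [dd_def, wd_def]; group

private theorem e1 : dd⁻¹ * ζ 1 * dd = ζ 0 := by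
  calc dd⁻¹ * ζ 1 * dd = dd⁻¹ * (ζ 1 * dd) := by group
  _ = dd⁻¹ * (dd * ζ 0) := by rw [← d1]
  _ = ζ 0 := by group

private theorem e2 : dd⁻¹ * ζ 2 * dd = ζ 1 := by
  calc dd⁻¹ * ζ 2 * dd = dd⁻¹ * (ζ 2 * dd) := by group
  _ = dd⁻¹ * (dd * ζ 1) := by rw [← d2]
  _ = ζ 1 := by group

private theorem e3 : dd⁻¹ * ζ 3 * dd = ζ 2 := by
  calc dd⁻¹ * ζ 3 * dd = dd⁻¹ * (ζ 3 * dd) := by group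
  _ = dd⁻¹ * (dd * ζ 2) := by rw [← d3]
  _ = ζ 2 := by group

private theorem e4 : dd⁻¹ * ζ 4 * dd = ζ 3 := by
  calc dd⁻¹ * ζ 4 * dd = dd⁻¹ * (ζ 4 * dd) := by group
  _ = dd⁻¹ * (dd * ζ 3) := by rw [← d4]
  _ = ζ 3 := by group

private theorem e0 : dd⁻¹ * ζ 0 * dd = wd := by
  have h04 : dd * (dd * (dd * (dd * ζ 0))) = ζ 4 * (dd * (dd * (dd * dd))) := by
    calc dd * (dd * (dd * (dd * ζ 0))) = dd * (dd * (dd * (ζ 1 * dd))) := by rw [d1]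
    _ = dd * (dd * ((dd * ζ 1) * dd)) := by group
    _ = dd * (dd * ((ζ 2 * dd) * dd)) := by rw [d2]
    _ = dd * ((dd * ζ 2) * (dd * dd)) := by group
    _ = dd * ((ζ 3 * dd) * (dd * dd)) := by rw [d3]
    _ = (dd * ζ 3) * (dd * (dd * dd)) := by group
    _ = (ζ 4 * dd) * (dd * (dd * dd)) := by rw [d4]
    _ = ζ 4 * (dd * (dd * (dd * dd))) := by group
  have hz : ζ 0 = (dd * (dd * (dd * dd)))⁻¹ * (ζ 4 * (dd * (dd * (dd * dd)))) := by
    rw [← h04]; group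
  have h5 : dd⁻¹ * ζ 0 * dd
      = (dd * (dd * (dd * (dd * dd))))⁻¹ * ζ 4 * (dd * (dd * (dd * (dd * dd)))) := by
    rw [hz]; group
  have h7 : dd ^ 5 * dd = 1 := by rw [← pow_succ]; exact dd6
  have h8 : (dd : Map₂) ^ 5 = dd⁻¹ := eq_inv_of_mul_eq_one_left h7
  have h9 : (dd : Map₂) ^ 5 = dd * (dd * (dd * (dd * dd))) := by
    rw [pow_succ, pow_succ, pow_succ, pow_succ, pow_one]; group
  have h6 : dd * (dd * (dd * (dd * dd))) = dd⁻¹ := by rw [← h9]; exact h8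
  rw [h5, h6, inv_inv, wd_def, dd_def]; group

/-! ### The key word identity for the `W₁` block move -/

private theorem comm02i : ζ 0 * (ζ 2)⁻¹ = (ζ 2)⁻¹ * ζ 0 := by
  calc ζ 0 * (ζ 2)⁻¹ = (ζ 2)⁻¹ * (ζ 2 * ζ 0) * (ζ 2)⁻¹ := by group
  _ = (ζ 2)⁻¹ * (ζ 0 * ζ 2) * (ζ 2)⁻¹ := by rw [comm02]
  _ = (ζ 2)⁻¹ * ζ 0 := by group

private theorem comm02i' : ζ 2 * (ζ 0)⁻¹ = (ζ 0)⁻¹ * ζ 2 := by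
  calc ζ 2 * (ζ 0)⁻¹ = (ζ 0)⁻¹ * (ζ 0 * ζ 2) * (ζ 0)⁻¹ := by group
  _ = (ζ 0)⁻¹ * (ζ 2 * ζ 0) * (ζ 0)⁻¹ := by rw [comm02]
  _ = (ζ 0)⁻¹ * ζ 2 := by group

private theorem gid : ζ 3 * ζ 4 * ζ 0 * ζ 1 * ζ 2 * ζ 3 = ζ 0 * ζ 1 * ζ 3 * ζ 2 * ζ 4 * ζ 3 := by
  calc ζ 3 * ζ 4 * ζ 0 * ζ 1 * ζ 2 * ζ 3 = ζ 3 * (ζ 4 * ζ 0) * ζ 1 * ζ 2 * ζ 3 := by group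
  _ = ζ 3 * (ζ 0 * ζ 4) * ζ 1 * ζ 2 * ζ 3 := by rw [← comm04]
  _ = (ζ 3 * ζ 0) * ζ 4 * ζ 1 * ζ 2 * ζ 3 := by group
  _ = (ζ 0 * ζ 3) * ζ 4 * ζ 1 * ζ 2 * ζ 3 := by rw [← comm03]
  _ = ζ 0 * ζ 3 * (ζ 4 * ζ 1) * ζ 2 * ζ 3 := by group
  _ = ζ 0 * ζ 3 * (ζ 1 * ζ 4) * ζ 2 * ζ 3 := by rw [← comm14]
  _ = ζ 0 * (ζ 3 * ζ 1) * ζ 4 * ζ 2 * ζ 3 := by group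
  _ = ζ 0 * (ζ 1 * ζ 3) * ζ 4 * ζ 2 * ζ 3 := by rw [← comm13]
  _ = ζ 0 * ζ 1 * ζ 3 * (ζ 4 * ζ 2) * ζ 3 := by group
  _ = ζ 0 * ζ 1 * ζ 3 * (ζ 2 * ζ 4) * ζ 3 := by rw [← comm24]
  _ = ζ 0 * ζ 1 * ζ 3 * ζ 2 * ζ 4 * ζ 3 := by group

private theorem inner43 : ζ 4 * ζ 3 * ζ 4 * (ζ 3)⁻¹ * (ζ 4)⁻¹ = ζ 3 := by
  rw [← braid34]; group

private theorem bigid :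
    (ζ 2)⁻¹ * ((ζ 1)⁻¹ * ζ 0 * ζ 1) * ζ 2 = ζ 3 * (ζ 4 * wd * (ζ 4)⁻¹) * (ζ 3)⁻¹ := by
  have key : ζ 3 * (ζ 4 * wd * (ζ 4)⁻¹) * (ζ 3)⁻¹
      = (ζ 3 * ζ 4 * ζ 0 * ζ 1 * ζ 2 * ζ 3) * ζ 4 * (ζ 3 * ζ 4 * ζ 0 * ζ 1 * ζ 2 * ζ 3)⁻¹ := by
    rw [wd_def]; group
  rw [key, gid]
  have step1 : (ζ 0 * ζ 1 * ζ 3 * ζ 2 * ζ 4 * ζ 3) * ζ 4 * (ζ 0 * ζ 1 * ζ 3 * ζ 2 * ζ 4 * ζ 3)⁻¹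
      = ζ 0 * ζ 1 * ζ 3 * ζ 2 * (ζ 4 * ζ 3 * ζ 4 * (ζ 3)⁻¹ * (ζ 4)⁻¹) * (ζ 2)⁻¹ * (ζ 3)⁻¹
        * (ζ 1)⁻¹ * (ζ 0)⁻¹ := by group
  rw [step1, inner43]
  have step2 : ζ 0 * ζ 1 * ζ 3 * ζ 2 * ζ 3 * (ζ 2)⁻¹ * (ζ 3)⁻¹ * (ζ 1)⁻¹ * (ζ 0)⁻¹
      = ζ 0 * ζ 1 * ζ 3 * (ζ 2 * ζ 3 * (ζ 2)⁻¹) * (ζ 3)⁻¹ * (ζ 1)⁻¹ * (ζ 0)⁻¹ := by group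
  rw [step2, bc23]
  have step3 : ζ 0 * ζ 1 * ζ 3 * ((ζ 3)⁻¹ * ζ 2 * ζ 3) * (ζ 3)⁻¹ * (ζ 1)⁻¹ * (ζ 0)⁻¹
      = ζ 0 * (ζ 1 * ζ 2 * (ζ 1)⁻¹) * (ζ 0)⁻¹ := by group
  rw [step3, bc12]
  have step4 : ζ 0 * ((ζ 2)⁻¹ * ζ 1 * ζ 2) * (ζ 0)⁻¹
      = (ζ 0 * (ζ 2)⁻¹) * ζ 1 * (ζ 2 * (ζ 0)⁻¹) := by group
  rw [step4, comm02i, comm02i']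
  have step5 : (ζ 2)⁻¹ * ζ 0 * ζ 1 * ((ζ 0)⁻¹ * ζ 2)
      = (ζ 2)⁻¹ * (ζ 0 * ζ 1 * (ζ 0)⁻¹) * ζ 2 := by group
  rw [step5, bc01]

/-! ### The Hurwitz stabilizer subgroup -/

private def hstab (F : List Map₂) : Subgroup Map₂ where
  carrier := {γ | HurwitzEquiv (fconj F γ) F}
  one_mem' := by
    show HurwitzEquiv (fconj F 1) F
    rw [fconj_one]; exact he_refl F
  mul_mem' := by
    intro a b ha hb
    show HurwitzEquiv (fconj F (a * b)) F
    rw [fconj_mul]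
    exact he_trans (fconj_equiv b ha) hb
  inv_mem' := by
    intro a ha
    show HurwitzEquiv (fconj F a⁻¹) F
    have h2 := fconj_equiv a⁻¹ ha
    have h3 : fconj (fconj F a) a⁻¹ = F := by
      rw [← fconj_mul, mul_inv_cancel, fconj_one]
    rw [h3] at h2
    exact he_symm h2

private theorem mem_hstab {F : List Map₂} {γ : Map₂} (h : γ ∈ hstab F) :
    HurwitzEquiv (fconj F γ) F := h

/-! ### `ζ₅` stabilizes `T` -/

private theorem T4 : HurwitzEquiv (fconj T (ζ 4)) T := by
  have c04' : (ζ 4)⁻¹ * ζ 0 * ζ 4 = ζ 0 := by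
    calc (ζ 4)⁻¹ * ζ 0 * ζ 4 = (ζ 4)⁻¹ * (ζ 0 * ζ 4) := by group
    _ = (ζ 4)⁻¹ * (ζ 4 * ζ 0) := by rw [comm04]
    _ = ζ 0 := by group
  have c14' : (ζ 4)⁻¹ * ζ 1 * ζ 4 = ζ 1 := by
    calc (ζ 4)⁻¹ * ζ 1 * ζ 4 = (ζ 4)⁻¹ * (ζ 1 * ζ 4) := by group
    _ = (ζ 4)⁻¹ * (ζ 4 * ζ 1) := by rw [comm14]
    _ = ζ 1 := by group
  have c24' : (ζ 4)⁻¹ * ζ 2 * ζ 4 = ζ 2 := by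
    calc (ζ 4)⁻¹ * ζ 2 * ζ 4 = (ζ 4)⁻¹ * (ζ 2 * ζ 4) := by group
    _ = (ζ 4)⁻¹ * (ζ 4 * ζ 2) := by rw [comm24]
    _ = ζ 2 := by group
  have c44' : (ζ 4)⁻¹ * ζ 4 * ζ 4 = ζ 4 := by group
  have hf : fconj T (ζ 4) = [ζ 0, ζ 1, ζ 2, (ζ 4)⁻¹ * ζ 3 * ζ 4, ζ 4, ζ 4,
      (ζ 4)⁻¹ * ζ 3 * ζ 4, ζ 2, ζ 1, ζ 0] := by
    simp only [fconj, T, List.map_cons, List.map_nil, c04', c14', c24', c44']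
  have pf1 : ζ 3 = ((ζ 4)⁻¹ * ζ 3 * ζ 4)⁻¹ * ζ 4 * ((ζ 4)⁻¹ * ζ 3 * ζ 4) := by
    have h1 : ((ζ 4)⁻¹ * ζ 3 * ζ 4)⁻¹ * ζ 4 * ((ζ 4)⁻¹ * ζ 3 * ζ 4)
        = (ζ 4)⁻¹ * (ζ 3)⁻¹ * (ζ 4 * ζ 3 * ζ 4) := by group
    rw [h1, ← braid34]; group
  have pf2 : (ζ 4)⁻¹ * ζ 3 * ζ 4 = ζ 3 * ζ 4 * (ζ 3)⁻¹ := (bconj braid34).symm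
  have C1 : HurwitzEquiv
      [ζ 0, ζ 1, ζ 2, (ζ 4)⁻¹ * ζ 3 * ζ 4, ζ 4, ζ 4, (ζ 4)⁻¹ * ζ 3 * ζ 4, ζ 2, ζ 1, ζ 0]
      [ζ 0, ζ 1, ζ 2, (ζ 4)⁻¹ * ζ 3 * ζ 4, ζ 4, (ζ 4)⁻¹ * ζ 3 * ζ 4, ζ 3, ζ 2, ζ 1, ζ 0] := by
    simpa using hmL [ζ 0, ζ 1, ζ 2, (ζ 4)⁻¹ * ζ 3 * ζ 4, ζ 4] [ζ 2, ζ 1, ζ 0]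
      (ζ 4) ((ζ 4)⁻¹ * ζ 3 * ζ 4) (ζ 3) pf1
  have C2 : HurwitzEquiv
      [ζ 0, ζ 1, ζ 2, (ζ 4)⁻¹ * ζ 3 * ζ 4, ζ 4, (ζ 4)⁻¹ * ζ 3 * ζ 4, ζ 3, ζ 2, ζ 1, ζ 0]
      [ζ 0, ζ 1, ζ 2, (ζ 4)⁻¹ * ζ 3 * ζ 4, (ζ 4)⁻¹ * ζ 3 * ζ 4, ζ 3, ζ 3, ζ 2, ζ 1, ζ 0] := by
    simpa using hmL [ζ 0, ζ 1, ζ 2, (ζ 4)⁻¹ * ζ 3 * ζ 4] [ζ 3, ζ 2, ζ 1, ζ 0]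
      (ζ 4) ((ζ 4)⁻¹ * ζ 3 * ζ 4) (ζ 3) pf1
  have D1 : HurwitzEquiv
      [ζ 0, ζ 1, ζ 2, ζ 3, ζ 4, ζ 4, ζ 3, ζ 2, ζ 1, ζ 0]
      [ζ 0, ζ 1, ζ 2, (ζ 4)⁻¹ * ζ 3 * ζ 4, ζ 3, ζ 4, ζ 3, ζ 2, ζ 1, ζ 0] := by
    simpa using hmR [ζ 0, ζ 1, ζ 2] [ζ 4, ζ 3, ζ 2, ζ 1, ζ 0] (ζ 3) (ζ 4)
      ((ζ 4)⁻¹ * ζ 3 * ζ 4) pf2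
  have D2 : HurwitzEquiv
      [ζ 0, ζ 1, ζ 2, (ζ 4)⁻¹ * ζ 3 * ζ 4, ζ 3, ζ 4, ζ 3, ζ 2, ζ 1, ζ 0]
      [ζ 0, ζ 1, ζ 2, (ζ 4)⁻¹ * ζ 3 * ζ 4, (ζ 4)⁻¹ * ζ 3 * ζ 4, ζ 3, ζ 3, ζ 2, ζ 1, ζ 0] := by
    simpa using hmR [ζ 0, ζ 1, ζ 2, (ζ 4)⁻¹ * ζ 3 * ζ 4] [ζ 3, ζ 2, ζ 1, ζ 0] (ζ 3) (ζ 4)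
      ((ζ 4)⁻¹ * ζ 3 * ζ 4) pf2
  rw [hf]
  show HurwitzEquiv _ [ζ 0, ζ 1, ζ 2, ζ 3, ζ 4, ζ 4, ζ 3, ζ 2, ζ 1, ζ 0]
  exact he_trans (he_trans C1 C2) (he_symm (he_trans D1 D2))

/-! ### `δ` stabilizes `T` -/

private theorem prodT : T.prod = Ihe := by
  simp only [T, List.prod_cons, List.prod_nil, Ihe]; group

private theorem Td : HurwitzEquiv (fconj T dd) T := by
  have hf : fconj T dd = [wd, ζ 0, ζ 1, ζ 2, ζ 3, ζ 3, ζ 2, ζ 1, ζ 0, wd] := by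
    simp only [fconj, T, List.map_cons, List.map_nil, e0, e1, e2, e3, e4]
  have hp0 : ([wd, ζ 0, ζ 1, ζ 2, ζ 3, ζ 3, ζ 2, ζ 1, ζ 0, wd] : List Map₂).prod = Ihe := by
    rw [← hf, prod_fconj, prodT, mul_assoc, Icentral dd]; group
  -- five rotations of `fconj T dd`
  obtain ⟨r1, hp1'⟩ := rot_c Icentral hp0
  have hp1 : ([ζ 0, ζ 1, ζ 2, ζ 3, ζ 3, ζ 2, ζ 1, ζ 0, wd, wd] : List Map₂).prod = Ihe := by
    simpa using hp1'
  obtain ⟨r2, hp2'⟩ := rot_c Icentral hp1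
  have hp2 : ([ζ 1, ζ 2, ζ 3, ζ 3, ζ 2, ζ 1, ζ 0, wd, wd, ζ 0] : List Map₂).prod = Ihe := by
    simpa using hp2'
  obtain ⟨r3, hp3'⟩ := rot_c Icentral hp2
  have hp3 : ([ζ 2, ζ 3, ζ 3, ζ 2, ζ 1, ζ 0, wd, wd, ζ 0, ζ 1] : List Map₂).prod = Ihe := by
    simpa using hp3'
  obtain ⟨r4, hp4'⟩ := rot_c Icentral hp3
  have hp4 : ([ζ 3, ζ 3, ζ 2, ζ 1, ζ 0, wd, wd, ζ 0, ζ 1, ζ 2] : List Map₂).prod = Ihe := by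
    simpa using hp4'
  obtain ⟨r5, _⟩ := rot_c Icentral hp4
  have hrotX : HurwitzEquiv (fconj T dd)
      [ζ 3, ζ 2, ζ 1, ζ 0, wd, wd, ζ 0, ζ 1, ζ 2, ζ 3] := by
    rw [hf]
    refine he_trans r1 (he_trans (by simpa using r2) (he_trans (by simpa using r3)
      (he_trans (by simpa using r4) (by simpa using r5))))
  -- the block move [wd, wd, ζ0, ζ1, ζ2, ζ3] ~ [ζ0, ζ1, ζ2, ζ3, ζ4, ζ4]
  have A1 : HurwitzEquiv ([wd, wd, ζ 0, ζ 1, ζ 2, ζ 3] : List Map₂)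
      [wd, ζ 0, (ζ 1 * ζ 2 * ζ 3) * ζ 4 * (ζ 1 * ζ 2 * ζ 3)⁻¹, ζ 1, ζ 2, ζ 3] := by
    simpa using hmL [wd] [ζ 1, ζ 2, ζ 3] wd (ζ 0)
      ((ζ 1 * ζ 2 * ζ 3) * ζ 4 * (ζ 1 * ζ 2 * ζ 3)⁻¹) (by rw [wd_def]; group)
  have A2 : HurwitzEquiv
      ([wd, ζ 0, (ζ 1 * ζ 2 * ζ 3) * ζ 4 * (ζ 1 * ζ 2 * ζ 3)⁻¹, ζ 1, ζ 2, ζ 3] : List Map₂)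
      [wd, ζ 0, ζ 1, (ζ 2 * ζ 3) * ζ 4 * (ζ 2 * ζ 3)⁻¹, ζ 2, ζ 3] := by
    simpa using hmL [wd, ζ 0] [ζ 2, ζ 3] ((ζ 1 * ζ 2 * ζ 3) * ζ 4 * (ζ 1 * ζ 2 * ζ 3)⁻¹) (ζ 1)
      ((ζ 2 * ζ 3) * ζ 4 * (ζ 2 * ζ 3)⁻¹) (by group)
  have A3 : HurwitzEquiv
      ([wd, ζ 0, ζ 1, (ζ 2 * ζ 3) * ζ 4 * (ζ 2 * ζ 3)⁻¹, ζ 2, ζ 3] : List Map₂)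
      [wd, ζ 0, ζ 1, ζ 2, ζ 3 * ζ 4 * (ζ 3)⁻¹, ζ 3] := by
    simpa using hmL [wd, ζ 0, ζ 1] [ζ 3] ((ζ 2 * ζ 3) * ζ 4 * (ζ 2 * ζ 3)⁻¹) (ζ 2)
      (ζ 3 * ζ 4 * (ζ 3)⁻¹) (by group)
  have A4 : HurwitzEquiv
      ([wd, ζ 0, ζ 1, ζ 2, ζ 3 * ζ 4 * (ζ 3)⁻¹, ζ 3] : List Map₂)
      [wd, ζ 0, ζ 1, ζ 2, ζ 3, ζ 4] := by
    simpa using hmL [wd, ζ 0, ζ 1, ζ 2] [] (ζ 3 * ζ 4 * (ζ 3)⁻¹) (ζ 3) (ζ 4) (by group)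
  have B1 : HurwitzEquiv ([ζ 0, ζ 1, ζ 2, ζ 3, ζ 4, ζ 4] : List Map₂)
      [ζ 0, ζ 1, ζ 2, ζ 3 * ζ 4 * (ζ 3)⁻¹, ζ 3, ζ 4] := by
    simpa using hmR [ζ 0, ζ 1, ζ 2] [ζ 4] (ζ 3) (ζ 4) (ζ 3 * ζ 4 * (ζ 3)⁻¹) rfl
  have B2 : HurwitzEquiv ([ζ 0, ζ 1, ζ 2, ζ 3 * ζ 4 * (ζ 3)⁻¹, ζ 3, ζ 4] : List Map₂)
      [ζ 0, ζ 1, (ζ 2 * ζ 3) * ζ 4 * (ζ 2 * ζ 3)⁻¹, ζ 2, ζ 3, ζ 4] := by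
    simpa using hmR [ζ 0, ζ 1] [ζ 3, ζ 4] (ζ 2) (ζ 3 * ζ 4 * (ζ 3)⁻¹)
      ((ζ 2 * ζ 3) * ζ 4 * (ζ 2 * ζ 3)⁻¹) (by group)
  have B3 : HurwitzEquiv
      ([ζ 0, ζ 1, (ζ 2 * ζ 3) * ζ 4 * (ζ 2 * ζ 3)⁻¹, ζ 2, ζ 3, ζ 4] : List Map₂)
      [ζ 0, (ζ 1 * ζ 2 * ζ 3) * ζ 4 * (ζ 1 * ζ 2 * ζ 3)⁻¹, ζ 1, ζ 2, ζ 3, ζ 4] := by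
    simpa using hmR [ζ 0] [ζ 2, ζ 3, ζ 4] (ζ 1) ((ζ 2 * ζ 3) * ζ 4 * (ζ 2 * ζ 3)⁻¹)
      ((ζ 1 * ζ 2 * ζ 3) * ζ 4 * (ζ 1 * ζ 2 * ζ 3)⁻¹) (by group)
  have B4 : HurwitzEquiv
      ([ζ 0, (ζ 1 * ζ 2 * ζ 3) * ζ 4 * (ζ 1 * ζ 2 * ζ 3)⁻¹, ζ 1, ζ 2, ζ 3, ζ 4] : List Map₂)
      [wd, ζ 0, ζ 1, ζ 2, ζ 3, ζ 4] := by
    simpa using hmR [] [ζ 1, ζ 2, ζ 3, ζ 4] (ζ 0)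
      ((ζ 1 * ζ 2 * ζ 3) * ζ 4 * (ζ 1 * ζ 2 * ζ 3)⁻¹) wd (by rw [wd_def]; group)
  have hAB : HurwitzEquiv ([wd, wd, ζ 0, ζ 1, ζ 2, ζ 3] : List Map₂)
      [ζ 0, ζ 1, ζ 2, ζ 3, ζ 4, ζ 4] :=
    he_trans (he_trans (he_trans A1 A2) (he_trans A3 A4))
      (he_symm (he_trans (he_trans B1 B2) (he_trans B3 B4)))
  have hblock : HurwitzEquiv
      ([ζ 3, ζ 2, ζ 1, ζ 0, wd, wd, ζ 0, ζ 1, ζ 2, ζ 3] : List Map₂)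
      [ζ 3, ζ 2, ζ 1, ζ 0, ζ 0, ζ 1, ζ 2, ζ 3, ζ 4, ζ 4] := by
    simpa using he_append_left [ζ 3, ζ 2, ζ 1, ζ 0] hAB
  -- six rotations of `T`
  have hq0 : ([ζ 0, ζ 1, ζ 2, ζ 3, ζ 4, ζ 4, ζ 3, ζ 2, ζ 1, ζ 0] : List Map₂).prod = Ihe := by
    simpa only [T] using prodT
  obtain ⟨s1, hq1'⟩ := rot_c Icentral hq0
  have hq1 : ([ζ 1, ζ 2, ζ 3, ζ 4, ζ 4, ζ 3, ζ 2, ζ 1, ζ 0, ζ 0] : List Map₂).prod = Ihe := by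
    simpa using hq1'
  obtain ⟨s2, hq2'⟩ := rot_c Icentral hq1
  have hq2 : ([ζ 2, ζ 3, ζ 4, ζ 4, ζ 3, ζ 2, ζ 1, ζ 0, ζ 0, ζ 1] : List Map₂).prod = Ihe := by
    simpa using hq2'
  obtain ⟨s3, hq3'⟩ := rot_c Icentral hq2
  have hq3 : ([ζ 3, ζ 4, ζ 4, ζ 3, ζ 2, ζ 1, ζ 0, ζ 0, ζ 1, ζ 2] : List Map₂).prod = Ihe := by
    simpa using hq3'
  obtain ⟨s4, hq4'⟩ := rot_c Icentral hq3
  have hq4 : ([ζ 4, ζ 4, ζ 3, ζ 2, ζ 1, ζ 0, ζ 0, ζ 1, ζ 2, ζ 3] : List Map₂).prod = Ihe := by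
    simpa using hq4'
  obtain ⟨s5, hq5'⟩ := rot_c Icentral hq4
  have hq5 : ([ζ 4, ζ 3, ζ 2, ζ 1, ζ 0, ζ 0, ζ 1, ζ 2, ζ 3, ζ 4] : List Map₂).prod = Ihe := by
    simpa using hq5'
  obtain ⟨s6, _⟩ := rot_c Icentral hq5
  have hrotT : HurwitzEquiv T
      [ζ 3, ζ 2, ζ 1, ζ 0, ζ 0, ζ 1, ζ 2, ζ 3, ζ 4, ζ 4] := by
    show HurwitzEquiv ([ζ 0, ζ 1, ζ 2, ζ 3, ζ 4, ζ 4, ζ 3, ζ 2, ζ 1, ζ 0] : List Map₂) _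
    refine he_trans s1 (he_trans (by simpa using s2) (he_trans (by simpa using s3)
      (he_trans (by simpa using s4) (he_trans (by simpa using s5) (by simpa using s6)))))
  exact he_trans hrotX (he_trans hblock (he_symm hrotT))

/-! ### `T` and `W₀` are fully invariant -/

private theorem memT : ∀ j : Fin 5, ζ j ∈ hstab T := by
  have m4 : ζ 4 ∈ hstab T := T4
  have md : dd ∈ hstab T := Td
  have conjmem : ∀ x : Map₂, x ∈ hstab T → dd⁻¹ * x * dd ∈ hstab T := fun x hx =>
    mul_mem (mul_mem (inv_mem md) hx) md
  have m3 : ζ 3 ∈ hstab T := by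
    have h : ζ 3 = dd⁻¹ * ζ 4 * dd := by rw [← f3]; group
    rw [h]; exact conjmem _ m4
  have m2 : ζ 2 ∈ hstab T := by
    have h : ζ 2 = dd⁻¹ * ζ 3 * dd := by rw [← f2]; group
    rw [h]; exact conjmem _ m3
  have m1 : ζ 1 ∈ hstab T := by
    have h : ζ 1 = dd⁻¹ * ζ 2 * dd := by rw [← f1]; group
    rw [h]; exact conjmem _ m2
  have m0 : ζ 0 ∈ hstab T := by
    have h : ζ 0 = dd⁻¹ * ζ 1 * dd := by rw [← f0]; group
    rw [h]; exact conjmem _ m1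
  intro j
  fin_cases j
  · exact m0
  · exact m1
  · exact m2
  · exact m3
  · exact m4

private theorem hT (γ : Map₂) : HurwitzEquiv (fconj T γ) T :=
  mem_hstab (PresentedGroup.generated_by map2Rels (hstab T) (fun j => memT j) γ)

private theorem hW0 (γ : Map₂) : HurwitzEquiv (fconj W₀ γ) W₀ := by
  show HurwitzEquiv (fconj (T ++ T) γ) (T ++ T)
  rw [fconj_append]
  exact he_append (hT γ) (hT γ)

/-! ### `ζ₁` stabilizes `W₁` -/

private theorem prodW1 : W₁.prod = 1 := by
  have h : W₁.prod = (ζ 0 * ζ 1 * ζ 2 * ζ 3 * ζ 4) ^ 6 := by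
    show ([ζ 0, ζ 1, ζ 2, ζ 3, ζ 4, ζ 0, ζ 1, ζ 2, ζ 3, ζ 4, ζ 0, ζ 1, ζ 2, ζ 3, ζ 4,
      ζ 0, ζ 1, ζ 2, ζ 3, ζ 4, ζ 0, ζ 1, ζ 2, ζ 3, ζ 4, ζ 0, ζ 1, ζ 2, ζ 3, ζ 4] :
        List Map₂).prod = _
    simp only [List.prod_cons, List.prod_nil]
    rw [pow_succ, pow_succ, pow_succ, pow_succ, pow_succ, pow_one]
    group
  rw [h]; exact delta6

private theorem W10 : HurwitzEquiv (fconj W₁ (ζ 0)) W₁ := by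
  have g0 : (ζ 0)⁻¹ * ζ 0 * ζ 0 = ζ 0 := by group
  have g2 : (ζ 0)⁻¹ * ζ 2 * ζ 0 = ζ 2 := by
    calc (ζ 0)⁻¹ * ζ 2 * ζ 0 = (ζ 0)⁻¹ * (ζ 2 * ζ 0) := by group
    _ = (ζ 0)⁻¹ * (ζ 0 * ζ 2) := by rw [← comm02]
    _ = ζ 2 := by group
  have g3 : (ζ 0)⁻¹ * ζ 3 * ζ 0 = ζ 3 := by
    calc (ζ 0)⁻¹ * ζ 3 * ζ 0 = (ζ 0)⁻¹ * (ζ 3 * ζ 0) := by group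
    _ = (ζ 0)⁻¹ * (ζ 0 * ζ 3) := by rw [← comm03]
    _ = ζ 3 := by group
  have g4 : (ζ 0)⁻¹ * ζ 4 * ζ 0 = ζ 4 := by
    calc (ζ 0)⁻¹ * ζ 4 * ζ 0 = (ζ 0)⁻¹ * (ζ 4 * ζ 0) := by group
    _ = (ζ 0)⁻¹ * (ζ 0 * ζ 4) := by rw [← comm04]
    _ = ζ 4 := by group
  have hfC : fconj [ζ 0, ζ 1, ζ 2, ζ 3, ζ 4] (ζ 0)
      = [ζ 0, (ζ 0)⁻¹ * ζ 1 * ζ 0, ζ 2, ζ 3, ζ 4] := by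
    simp only [fconj, List.map_cons, List.map_nil, g0, g2, g3, g4]
  have m1 : HurwitzEquiv ([ζ 0, (ζ 0)⁻¹ * ζ 1 * ζ 0, ζ 2, ζ 3, ζ 4] : List Map₂)
      [ζ 1, ζ 0, ζ 2, ζ 3, ζ 4] := by
    simpa using hmR [] [ζ 2, ζ 3, ζ 4] (ζ 0) ((ζ 0)⁻¹ * ζ 1 * ζ 0) (ζ 1) (by group)
  have m2 : HurwitzEquiv ([ζ 1, ζ 0, ζ 2, ζ 3, ζ 4] : List Map₂)
      [ζ 1, ζ 2, ζ 0, ζ 3, ζ 4] := by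
    simpa using hmR [ζ 1] [ζ 3, ζ 4] (ζ 0) (ζ 2) (ζ 2) (by rw [comm02]; group)
  have m3 : HurwitzEquiv ([ζ 1, ζ 2, ζ 0, ζ 3, ζ 4] : List Map₂)
      [ζ 1, ζ 2, ζ 3, ζ 0, ζ 4] := by
    simpa using hmR [ζ 1, ζ 2] [ζ 4] (ζ 0) (ζ 3) (ζ 3) (by rw [comm03]; group)
  have m4 : HurwitzEquiv ([ζ 1, ζ 2, ζ 3, ζ 0, ζ 4] : List Map₂)
      [ζ 1, ζ 2, ζ 3, ζ 4, ζ 0] := by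
    simpa using hmR [ζ 1, ζ 2, ζ 3] [] (ζ 0) (ζ 4) (ζ 4) (by rw [comm04]; group)
  have hC : HurwitzEquiv (fconj [ζ 0, ζ 1, ζ 2, ζ 3, ζ 4] (ζ 0)) [ζ 1, ζ 2, ζ 3, ζ 4, ζ 0] := by
    rw [hfC]; exact he_trans m1 (he_trans m2 (he_trans m3 m4))
  have hblocks : HurwitzEquiv (fconj W₁ (ζ 0)) (fpow [ζ 1, ζ 2, ζ 3, ζ 4, ζ 0] 6) := by
    show HurwitzEquiv (fconj (fpow [ζ 0, ζ 1, ζ 2, ζ 3, ζ 4] 6) (ζ 0)) _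
    rw [fconj_fpow]
    exact he_fpow hC 6
  have hrot := (rot_c (c := (1 : Map₂)) (fun h => by rw [one_mul, mul_one]) prodW1).1
  have hfin : HurwitzEquiv W₁ (fpow [ζ 1, ζ 2, ζ 3, ζ 4, ζ 0] 6) := by
    have e2 : fpow [ζ 1, ζ 2, ζ 3, ζ 4, ζ 0] 6
        = [ζ 1, ζ 2, ζ 3, ζ 4, ζ 0, ζ 1, ζ 2, ζ 3, ζ 4, ζ 0, ζ 1, ζ 2, ζ 3, ζ 4, ζ 0,
           ζ 1, ζ 2, ζ 3, ζ 4, ζ 0, ζ 1, ζ 2, ζ 3, ζ 4, ζ 0, ζ 1, ζ 2, ζ 3, ζ 4, ζ 0] := rfl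
    rw [e2]
    show HurwitzEquiv ([ζ 0, ζ 1, ζ 2, ζ 3, ζ 4, ζ 0, ζ 1, ζ 2, ζ 3, ζ 4, ζ 0, ζ 1, ζ 2, ζ 3, ζ 4,
      ζ 0, ζ 1, ζ 2, ζ 3, ζ 4, ζ 0, ζ 1, ζ 2, ζ 3, ζ 4, ζ 0, ζ 1, ζ 2, ζ 3, ζ 4] : List Map₂) _
    simpa using hrot
  exact he_trans hblocks (he_symm hfin)

/-! ### `δ⁻¹` stabilizes `W₁` -/

private theorem W1d : HurwitzEquiv (fconj W₁ dd⁻¹) W₁ := by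
  have k0 : (dd⁻¹)⁻¹ * ζ 0 * dd⁻¹ = ζ 1 := by rw [inv_inv]; exact f0
  have k1 : (dd⁻¹)⁻¹ * ζ 1 * dd⁻¹ = ζ 2 := by rw [inv_inv]; exact f1
  have k2 : (dd⁻¹)⁻¹ * ζ 2 * dd⁻¹ = ζ 3 := by rw [inv_inv]; exact f2
  have k3 : (dd⁻¹)⁻¹ * ζ 3 * dd⁻¹ = ζ 4 := by rw [inv_inv]; exact f3
  have k4 : (dd⁻¹)⁻¹ * ζ 4 * dd⁻¹ = wd := by rw [inv_inv]; exact f4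
  have hfC : fconj [ζ 0, ζ 1, ζ 2, ζ 3, ζ 4] dd⁻¹ = [ζ 1, ζ 2, ζ 3, ζ 4, wd] := by
    simp only [fconj, List.map_cons, List.map_nil, k0, k1, k2, k3, k4]
  have F1 : HurwitzEquiv ([ζ 1, ζ 2, ζ 3, ζ 4, wd] : List Map₂)
      [ζ 1, ζ 2, ζ 3, ζ 4 * wd * (ζ 4)⁻¹, ζ 4] := by
    simpa using hmR [ζ 1, ζ 2, ζ 3] [] (ζ 4) wd (ζ 4 * wd * (ζ 4)⁻¹) rfl
  have F2 : HurwitzEquiv ([ζ 1, ζ 2, ζ 3, ζ 4 * wd * (ζ 4)⁻¹, ζ 4] : List Map₂)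
      [ζ 1, ζ 2, (ζ 2)⁻¹ * ((ζ 1)⁻¹ * ζ 0 * ζ 1) * ζ 2, ζ 3, ζ 4] := by
    simpa using hmR [ζ 1, ζ 2] [ζ 4] (ζ 3) (ζ 4 * wd * (ζ 4)⁻¹)
      ((ζ 2)⁻¹ * ((ζ 1)⁻¹ * ζ 0 * ζ 1) * ζ 2) bigid
  have G1 : HurwitzEquiv ([ζ 0, ζ 1, ζ 2, ζ 3, ζ 4] : List Map₂)
      [ζ 1, (ζ 1)⁻¹ * ζ 0 * ζ 1, ζ 2, ζ 3, ζ 4] := by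
    simpa using hmL [] [ζ 2, ζ 3, ζ 4] (ζ 0) (ζ 1) ((ζ 1)⁻¹ * ζ 0 * ζ 1) rfl
  have G2 : HurwitzEquiv ([ζ 1, (ζ 1)⁻¹ * ζ 0 * ζ 1, ζ 2, ζ 3, ζ 4] : List Map₂)
      [ζ 1, ζ 2, (ζ 2)⁻¹ * ((ζ 1)⁻¹ * ζ 0 * ζ 1) * ζ 2, ζ 3, ζ 4] := by
    simpa using hmL [ζ 1] [ζ 3, ζ 4] ((ζ 1)⁻¹ * ζ 0 * ζ 1) (ζ 2)
      ((ζ 2)⁻¹ * ((ζ 1)⁻¹ * ζ 0 * ζ 1) * ζ 2) rfl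
  have hC : HurwitzEquiv (fconj [ζ 0, ζ 1, ζ 2, ζ 3, ζ 4] dd⁻¹) [ζ 0, ζ 1, ζ 2, ζ 3, ζ 4] := by
    rw [hfC]
    exact he_trans (he_trans F1 F2) (he_symm (he_trans G1 G2))
  show HurwitzEquiv (fconj (fpow [ζ 0, ζ 1, ζ 2, ζ 3, ζ 4] 6) dd⁻¹)
    (fpow [ζ 0, ζ 1, ζ 2, ζ 3, ζ 4] 6)
  rw [fconj_fpow]
  exact he_fpow hC 6

/-! ### `W₁` is fully invariant -/

private theorem memW1 : ∀ j : Fin 5, ζ j ∈ hstab W₁ := by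
  have m0 : ζ 0 ∈ hstab W₁ := W10
  have mdinv : dd⁻¹ ∈ hstab W₁ := W1d
  have md : dd ∈ hstab W₁ := by
    have := inv_mem mdinv
    rwa [inv_inv] at this
  have conjmem : ∀ x : Map₂, x ∈ hstab W₁ → dd * x * dd⁻¹ ∈ hstab W₁ := fun x hx =>
    mul_mem (mul_mem md hx) mdinv
  have m1 : ζ 1 ∈ hstab W₁ := by rw [← f0]; exact conjmem _ m0
  have m2 : ζ 2 ∈ hstab W₁ := by rw [← f1]; exact conjmem _ m1
  have m3 : ζ 3 ∈ hstab W₁ := by rw [← f2]; exact conjmem _ m2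
  have m4 : ζ 4 ∈ hstab W₁ := by rw [← f3]; exact conjmem _ m3
  intro j
  fin_cases j
  · exact m0
  · exact m1
  · exact m2
  · exact m3
  · exact m4

private theorem hW1 (γ : Map₂) : HurwitzEquiv (fconj W₁ γ) W₁ :=
  mem_hstab (PresentedGroup.generated_by map2Rels (hstab W₁) (fun j => memW1 j) γ)


/-- **Lemma 7.** The factorizations `T`, `W₀` and `W₁` are fully invariant: simultaneous
conjugation by any `γ ∈ Map₂` yields a Hurwitz equivalent factorization. -/
theorem fully_invariant (γ : Map₂) :
    HurwitzEquiv (fconj T γ) T ∧ HurwitzEquiv (fconj W₀ γ) W₀ ∧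
      HurwitzEquiv (fconj W₁ γ) W₁ :=
  ⟨hT γ, hW0 γ, hW1 γ⟩
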